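/- If $(A,p,0,\text{½},1)$ is a mobi algebra, then $(A,\oplus)$ with $x\oplus y=p(x,\text{½},y)$ is a midpoint algebra: $\oplus$ is idempotent, commutative, cancellative ($x\oplus y=x'\oplus y\Rightarrow x=x'$), and medial ($(x\oplus y)\oplus(z\oplus w)=(x\oplus z)\oplus(y\oplus w)$). -/
import Mathlib


structure MobiAlgebra (A : Type*) where
  p : A → A → A → A
  zero : A
  half : A
  one : A
  A1 : p one half zero = half
  A2 : ∀ a, p zero a one = a
  A3 : ∀ a b, p a b a = a
  A4 : ∀ a b, p a zero b = a
  A5 : ∀ a b, p a one b = b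
  A6 : ∀ a b₁ b₂, p a half b₁ = p a half b₂ → b₁ = b₂
  A7 : ∀ a b c₁ c₂ c₃, p a (p c₁ c₂ c₃) b = p (p a c₁ b) c₂ (p a c₃ b)
  A8 : ∀ a₁ a₂ b₁ b₂ c,
    p (p a₁ c b₁) half (p a₂ c b₂) = p (p a₁ half a₂) c (p b₁ half b₂)

structure MobiSpace {A : Type*} (M : MobiAlgebra A) (X : Type*) where
  q : X → A → X → X
  X1 : ∀ x y, q x M.zero y = x
  X2 : ∀ x y, q x M.one y = y
  X3 : ∀ x a, q x a x = x
  X4 : ∀ x y₁ y₂, q x M.half y₁ = q x M.half y₂ → y₁ = y₂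
  X5 : ∀ x y a b c, q (q x a y) b (q x c y) = q x (M.p a b c) y

theorem mobi_midpoint {A : Type*} (M : MobiAlgebra A) :
    (∀ x, M.p x M.half x = x) ∧
    (∀ x y, M.p x M.half y = M.p y M.half x) ∧
    (∀ x x' y, M.p x M.half y = M.p x' M.half y → x = x') ∧
    (∀ x y z w, M.p (M.p x M.half y) M.half (M.p z M.half w)
      = M.p (M.p x M.half z) M.half (M.p y M.half w)) := by
  have comm : ∀ x y, M.p x M.half y = M.p y M.half x := by
    intro x y
    calc M.p x M.half y = M.p x (M.p M.one M.half M.zero) y := by rw [M.A1]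
      _ = M.p (M.p x M.one y) M.half (M.p x M.zero y) := M.A7 ..
      _ = M.p y M.half x := by rw [M.A5, M.A4]
  refine ⟨fun x => M.A3 x M.half, comm, ?_, ?_⟩
  · intro x x' y h
    apply M.A6 y
    rw [comm y x, comm y x', h]
  · intro x y z w
    exact M.A8 x z y w M.half
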